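/- Let K be a field, R = K[x_1,…,x_n], and let I ⊆ R be a normally torsion-free square-free monomial ideal with minimal monomial generating set G(I) = {u_1,…,u_m}. Let S = R[x_{n+1},…,x_{n+m}] = K[x_1,…,x_{n+m}], let f be a square-free monomial dividing u_m, and set L = (u_1,…,u_{m−1})S + f x_{n+1}⋯x_{n+m} S. Assume f x_{n+1}⋯x_{n+m} ∉ 𝔭^2 for every minimal prime 𝔭 of L, and that the ideal (u_1,…,u_{m−1})S is normally torsion-free. Then L has the strong persistence property, that is, (L^{k+1} :_S L) = L^k for all integers k ≥ 1. -/

import Mathlib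

open MvPolynomial

namespace SP14



variable {σ : Type*} {K : Type*} [Field K]

/-- characteristic (indicator) finsupp of a finite set -/
noncomputable def chr (A : Finset σ) : σ →₀ ℕ := ∑ i ∈ A, Finsupp.single i 1

lemma chr_apply [DecidableEq σ] (A : Finset σ) (c : σ) :
    chr A c = if c ∈ A then 1 else 0 := by
  classical
  simp only [chr, Finsupp.finset_sum_apply, Finsupp.single_apply]
  rw [Finset.sum_ite_eq' A c (fun _ => 1)]

lemma chr_le_iff [DecidableEq σ] {A : Finset σ} {d : σ →₀ ℕ} :
    chr A ≤ d ↔ ∀ c ∈ A, 1 ≤ d c := by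
  rw [Finsupp.le_def]
  constructor
  · intro h c hc
    have := h c
    rwa [chr_apply, if_pos hc] at this
  · intro h c
    rw [chr_apply]
    split
    · exact h c ‹_›
    · exact Nat.zero_le _

lemma chr_insert [DecidableEq σ] {A : Finset σ} {c : σ} (hc : c ∉ A) :
    chr (insert c A) = Finsupp.single c 1 + chr A := by
  simp [chr, Finset.sum_insert hc]

lemma chr_sdiff_singleton [DecidableEq σ] {A : Finset σ} {c : σ} (hc : c ∈ A) :
    chr A = Finsupp.single c 1 + chr (A \ {c}) := by
  have : A = insert c (A \ {c}) := by
    ext x; simp [Finset.mem_sdiff, Finset.mem_insert]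
    constructor
    · intro hx; by_cases h : x = c <;> simp [h, hx]
    · rintro (rfl | ⟨hx, _⟩) <;> assumption
  conv_lhs => rw [this]
  rw [chr_insert (by simp)]

lemma chr_union_of_disjoint [DecidableEq σ] {A B : Finset σ} (h : Disjoint A B) :
    chr (A ∪ B) = chr A + chr B := by
  simp [chr, Finset.sum_union h]

/-- product of variables over a finite set equals the monomial with indicator exponent -/
lemma prod_X_eq_monomial_chr (A : Finset σ) :
    (∏ c ∈ A, (X c : MvPolynomial σ K)) = monomial (chr A) 1 := by
  classical
  induction A using Finset.induction with
  | empty => simp [chr]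
  | insert _ _ hc ih =>
      rw [Finset.prod_insert hc, ih, chr_insert hc, X, monomial_mul, one_mul]





/-- k-fold sumset -/
def sumset : ℕ → Set (σ →₀ ℕ) → Set (σ →₀ ℕ)
  | 0, _ => {0}
  | (k+1), T => {e | ∃ a ∈ T, ∃ b ∈ sumset k T, e = a + b}

lemma sumset_mono {k : ℕ} {T T' : Set (σ →₀ ℕ)} (h : T ⊆ T') :
    sumset k T ⊆ sumset k T' := by
  induction k with
  | zero => exact le_rfl
  | succ k ih =>
      rintro e ⟨a, ha, b, hb, rfl⟩
      exact ⟨a, h ha, b, ih hb, rfl⟩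

lemma add_mem_sumset {p q : ℕ} {T : Set (σ →₀ ℕ)} {a b : σ →₀ ℕ}
    (ha : a ∈ sumset p T) (hb : b ∈ sumset q T) : a + b ∈ sumset (p + q) T := by
  induction p generalizing a with
  | zero =>
      rw [Set.mem_singleton_iff.mp ha, zero_add]
      simpa using hb
  | succ p ih =>
      obtain ⟨x, hx, y, hy, rfl⟩ := ha
      rw [Nat.succ_add, add_assoc]
      exact ⟨x, hx, y + b, ih hy, rfl⟩

lemma nsmul_mem_sumset {p : ℕ} {T : Set (σ →₀ ℕ)} {a : σ →₀ ℕ} (ha : a ∈ T) :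
    p • a ∈ sumset p T := by
  induction p with
  | zero => simp [sumset]
  | succ p ih =>
      rw [succ_nsmul']
      have h1 : a ∈ sumset 1 T := ⟨a, ha, 0, rfl, (add_zero a).symm⟩
      have := add_mem_sumset h1 ih
      rwa [Nat.add_comm 1 p] at this

lemma wsum_mem_sumset {α : Type*} {T : Set (σ →₀ ℕ)} (s : Finset α) (w : α → ℕ)
    (g : α → (σ →₀ ℕ)) (hg : ∀ i ∈ s, g i ∈ T) :
    (∑ i ∈ s, w i • g i) ∈ sumset (∑ i ∈ s, w i) T := by
  classical
  induction s using Finset.induction with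
  | empty => simp [sumset]
  | insert _ _ hc ih =>
      rw [Finset.sum_insert hc, Finset.sum_insert hc]
      exact add_mem_sumset (nsmul_mem_sumset (hg _ (Finset.mem_insert_self _ _)))
        (ih fun i hi => hg i (Finset.mem_insert_of_mem hi))

lemma sumset_union_singleton {N : ℕ} {T : Set (σ →₀ ℕ)} {w e : σ →₀ ℕ}
    (he : e ∈ sumset N (T ∪ {w})) :
    ∃ i b, i ≤ N ∧ b ∈ sumset (N - i) T ∧ e = i • w + b := by
  induction N generalizing e with
  | zero => exact ⟨0, 0, le_rfl, rfl, by rw [zero_smul, zero_add]; exact he⟩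
  | succ N ih =>
      obtain ⟨a, ha, b', hb', rfl⟩ := he
      obtain ⟨i, b, hiN, hb, rfl⟩ := ih hb'
      rcases ha with ha | ha
      · refine ⟨i, a + b, hiN.trans (Nat.le_succ N), ?_, by abel⟩
        have : a + b ∈ sumset (1 + (N - i)) T :=
          add_mem_sumset (p := 1) ⟨a, ha, 0, rfl, (add_zero a).symm⟩ hb
        have hnum : 1 + (N - i) = N + 1 - i := by omega
        rwa [hnum] at this
      · rw [Set.mem_singleton_iff.mp ha]
        refine ⟨i + 1, b, by omega, by simpa using hb, ?_⟩
        rw [succ_nsmul']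
        abel

lemma le_sum_of_mem_sumset [DecidableEq σ] {q : ℕ} {T : Set (σ →₀ ℕ)} {b : σ →₀ ℕ}
    (hb : b ∈ sumset q T) (C : Finset σ) (hT : ∀ a ∈ T, 1 ≤ ∑ c ∈ C, a c) :
    q ≤ ∑ c ∈ C, b c := by
  induction q generalizing b with
  | zero => exact Nat.zero_le _
  | succ q ih =>
      obtain ⟨a, ha, b', hb', rfl⟩ := hb
      have : ∑ c ∈ C, (a + b') c = (∑ c ∈ C, a c) + ∑ c ∈ C, b' c := by
        simp [Finsupp.add_apply, Finset.sum_add_distrib]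
      rw [this]
      have := hT a ha
      have := ih hb'
      omega




noncomputable def Ispan (K : Type*) [Field K] (T : Set (σ →₀ ℕ)) : Ideal (MvPolynomial σ K) :=
  Ideal.span ((fun e => monomial e (1 : K)) '' T)

lemma mem_Ispan {T : Set (σ →₀ ℕ)} {x : MvPolynomial σ K} :
    x ∈ Ispan K T ↔ ∀ d ∈ x.support, ∃ e ∈ T, e ≤ d :=
  mem_ideal_span_monomial_image

lemma monomial_mem_Ispan {T : Set (σ →₀ ℕ)} {d : σ →₀ ℕ} :
    monomial d (1 : K) ∈ Ispan K T ↔ ∃ e ∈ T, e ≤ d := by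
  classical
  rw [mem_Ispan, support_monomial, if_neg (one_ne_zero)]
  simp

lemma Ispan_mono {T T' : Set (σ →₀ ℕ)} (h : T ⊆ T') : Ispan K T ≤ Ispan (σ := σ) K T' :=
  Ideal.span_mono (Set.image_mono h)

lemma Ispan_pow (T : Set (σ →₀ ℕ)) (k : ℕ) :
    (Ispan (σ := σ) K T) ^ k = Ispan K (sumset k T) := by
  induction k with
  | zero =>
      rw [pow_zero]
      have : sumset 0 T = {(0 : σ →₀ ℕ)} := rfl
      rw [this]
      have : ((fun e => monomial e (1 : K)) '' {(0 : σ →₀ ℕ)}) = {(1 : MvPolynomial σ K)} := by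
        simp [monomial_zero']
      rw [Ispan, this, Ideal.span_singleton_one]
      exact Ideal.one_eq_top
  | succ k ih =>
      rw [pow_succ', ih, Ispan, Ispan, Ispan, Ideal.span_mul_span']
      congr 1
      ext x
      constructor
      · rintro ⟨y, ⟨a, ha, rfl⟩, z, ⟨b, hb, rfl⟩, rfl⟩
        exact ⟨a + b, ⟨a, ha, b, hb, rfl⟩, by simp [monomial_mul]⟩
      · rintro ⟨e, ⟨a, ha, b, hb, rfl⟩, rfl⟩
        exact ⟨monomial a 1, ⟨a, ha, rfl⟩, monomial b 1, ⟨b, hb, rfl⟩,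
          by simp [monomial_mul]⟩





noncomputable def pC (K : Type*) [Field K] (C : Finset σ) : Ideal (MvPolynomial σ K) :=
  Ispan K ((fun c => Finsupp.single c 1) '' ↑C)

lemma mem_pC {C : Finset σ} {f : MvPolynomial σ K} :
    f ∈ pC K C ↔ ∀ d ∈ f.support, ∃ c ∈ C, 1 ≤ d c := by
  rw [pC, mem_Ispan]
  constructor
  · intro h d hd
    obtain ⟨e, ⟨c, hc, rfl⟩, hle⟩ := h d hd
    exact ⟨c, hc, Finsupp.single_le_iff.mp hle⟩
  · intro h d hd
    obtain ⟨c, hc, hle⟩ := h d hd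
    exact ⟨Finsupp.single c 1, ⟨c, hc, rfl⟩, Finsupp.single_le_iff.mpr hle⟩

lemma monomial_mem_pC {C : Finset σ} {d : σ →₀ ℕ} :
    monomial d (1 : K) ∈ pC K C ↔ ∃ c ∈ C, 1 ≤ d c := by
  classical
  rw [mem_pC, support_monomial, if_neg one_ne_zero]
  simp

lemma pC_prime [DecidableEq σ] (C : Finset σ) : (pC K C).IsPrime := by
  classical
  set g : σ → MvPolynomial σ K := fun i => if i ∈ C then 0 else X i with hg
  have key : ∀ (f : MvPolynomial σ K) (d₀ : σ →₀ ℕ), (∀ c ∈ C, d₀ c = 0) →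
      coeff d₀ (aeval g f) = coeff d₀ f := by
    intro f d₀ hd₀
    conv_lhs => rw [← support_sum_monomial_coeff f]
    rw [map_sum]
    have hterm : ∀ d ∈ f.support,
        coeff d₀ (aeval g (monomial d (coeff d f))) = if d = d₀ then coeff d f else 0 := by
      intro d _
      rw [aeval_monomial]
      by_cases ht : ∃ c ∈ C, d c ≠ 0
      · obtain ⟨c, hc, hdc⟩ := ht
        have hzero : (d.prod fun n e => g n ^ e) = 0 := by
          rw [Finsupp.prod]
          apply Finset.prod_eq_zero (Finsupp.mem_support_iff.mpr hdc)
          simp [hg, if_pos hc, zero_pow hdc]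
        have hne : d ≠ d₀ := by
          rintro rfl
          exact hdc (hd₀ c hc)
        rw [hzero, mul_zero, coeff_zero, if_neg hne]
      · push_neg at ht
        have hprod : (d.prod fun n e => g n ^ e)
            = (d.prod fun n e => (X n : MvPolynomial σ K) ^ e) := by
          apply Finsupp.prod_congr
          intro c hc
          have hcC : c ∉ C := fun h => (Finsupp.mem_support_iff.mp hc) (ht c h)
          simp [hg, if_neg hcC]
        rw [hprod, algebraMap_eq, ← monomial_eq, coeff_monomial]
    rw [coeff_sum, Finset.sum_congr rfl hterm, Finset.sum_ite_eq' f.support d₀ (fun d => coeff d f)]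
    split
    · rfl
    · exact (MvPolynomial.notMem_support_iff.mp ‹_›).symm
  have hker : pC K C = RingHom.ker ((aeval g : MvPolynomial σ K →ₐ[K] MvPolynomial σ K) :
      MvPolynomial σ K →+* MvPolynomial σ K) := by
    apply le_antisymm
    · rw [pC, Ispan, Ideal.span_le]
      rintro _ ⟨e, ⟨c, hc, rfl⟩, rfl⟩
      have hc' : c ∈ C := hc
      simp only [SetLike.mem_coe, RingHom.mem_ker, RingHom.coe_coe]
      have hX : (monomial (Finsupp.single c 1) (1 : K)) = X c := rfl
      rw [hX, aeval_X]
      simp [hg, hc']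
    · intro f hf
      rw [RingHom.mem_ker] at hf
      rw [mem_pC]
      intro d hd
      by_contra hcon
      push_neg at hcon
      have hd0 : ∀ c ∈ C, d c = 0 := fun c hc => by
        have := hcon c hc; omega
      have hkey := key f d hd0
      have hfz : (aeval g) f = 0 := hf
      rw [hfz, coeff_zero] at hkey
      have this := hkey
      exact (MvPolynomial.mem_support_iff.mp hd) this.symm
  rw [hker]
  exact RingHom.ker_isPrime _




def Cov [DecidableEq σ] (ES : Set (Finset σ)) (C : Finset σ) : Prop := ∀ E ∈ ES, (E ∩ C).Nonempty

def Priv [DecidableEq σ] (ES : Set (Finset σ)) (C : Finset σ) : Prop := ∀ c ∈ C, ∃ E ∈ ES, E ∩ C = {c}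

lemma exists_priv_subcover [DecidableEq σ] (ES : Set (Finset σ)) (C : Finset σ)
    (hC : Cov ES C) : ∃ C' ⊆ C, Cov ES C' ∧ Priv ES C' := by
  induction C using Finset.strongInduction with
  | _ C ih =>
    by_cases hP : Priv ES C
    · exact ⟨C, subset_rfl, hC, hP⟩
    · rw [Priv] at hP
      push_neg at hP
      obtain ⟨c, hcC, hc⟩ := hP
      have hcov : Cov ES (C.erase c) := by
        intro E hE
        rw [Finset.nonempty_iff_ne_empty]
        intro hemp
        apply hc E hE
        have hsub : E ∩ C ⊆ {c} := by
          intro y hy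
          rw [Finset.mem_singleton]
          by_contra hyc
          have hmem : y ∈ E ∩ C.erase c := by
            rw [Finset.mem_inter] at hy ⊢
            exact ⟨hy.1, Finset.mem_erase.mpr ⟨hyc, hy.2⟩⟩
          rw [hemp] at hmem
          exact absurd hmem (Finset.notMem_empty y)
        rcases Finset.subset_singleton_iff.mp hsub with h | h
        · exact absurd h (Finset.nonempty_iff_ne_empty.mp (hC E hE))
        · exact h
      obtain ⟨C', h1, h2, h3⟩ := ih (C.erase c) (Finset.erase_ssubset hcC) hcov
      exact ⟨C', h1.trans (Finset.erase_subset c C), h2, h3⟩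

lemma Ispan_le_pC_of_cov [DecidableEq σ] {ES : Set (Finset σ)} {C : Finset σ}
    (hC : Cov ES C) : Ispan K (chr '' ES) ≤ pC K C := by
  rw [Ispan, Ideal.span_le]
  rintro _ ⟨e, ⟨E, hE, rfl⟩, rfl⟩
  rw [SetLike.mem_coe, monomial_mem_pC]
  obtain ⟨c, hc⟩ := hC E hE
  rw [Finset.mem_inter] at hc
  exact ⟨c, hc.2, by rw [chr_apply, if_pos hc.1]⟩

lemma mem_Ispan_chr_iff [Fintype σ] [DecidableEq σ] {ES : Set (Finset σ)}
    {f : MvPolynomial σ K} :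
    f ∈ Ispan K (chr '' ES) ↔ ∀ C : Finset σ, Cov ES C → f ∈ pC K C := by
  constructor
  · exact fun hf C hC => Ispan_le_pC_of_cov hC hf
  · intro hf
    rw [mem_Ispan]
    intro d hd
    have hncov : ¬ Cov ES (Finset.univ \ d.support) := by
      intro hcov
      obtain ⟨c, hcC, hc1⟩ := mem_pC.mp (hf _ hcov) d hd
      rw [Finset.mem_sdiff, Finsupp.mem_support_iff] at hcC
      exact hcC.2 (by omega)
    rw [Cov] at hncov
    push_neg at hncov
    obtain ⟨E, hE, hecov⟩ := hncov
    refine ⟨chr E, ⟨E, hE, rfl⟩, chr_le_iff.mpr fun c hc => ?_⟩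
    have : c ∉ Finset.univ \ d.support := by
      intro hmem
      have : c ∈ E ∩ (Finset.univ \ d.support) := Finset.mem_inter.mpr ⟨hc, hmem⟩
      rw [hecov] at this
      exact absurd this (Finset.notMem_empty c)
    rw [Finset.mem_sdiff, not_and, Finsupp.mem_support_iff] at this
    have := this (Finset.mem_univ c)
    omega

lemma exists_weights [DecidableEq σ] (s : Finset σ) (d : σ →₀ ℕ) (k : ℕ)
    (hk : k ≤ ∑ c ∈ s, d c) :
    ∃ κ : σ → ℕ, (∀ c, κ c ≤ d c) ∧ ∑ c ∈ s, κ c = k := by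
  induction s using Finset.induction generalizing k with
  | empty =>
      simp only [Finset.sum_empty] at hk ⊢
      exact ⟨fun _ => 0, fun c => Nat.zero_le _, by omega⟩
  | @insert a s ha ih =>
      rw [Finset.sum_insert ha] at hk
      by_cases h : k ≤ ∑ c ∈ s, d c
      · obtain ⟨κ, hκ1, hκ2⟩ := ih k h
        refine ⟨Function.update κ a 0, fun c => ?_, ?_⟩
        · by_cases hca : c = a
          · subst hca; simp [Function.update_self]
          · simp [Function.update_of_ne hca]; exact hκ1 c
        · have hsum : ∑ c ∈ s, Function.update κ a 0 c = ∑ c ∈ s, κ c :=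
            Finset.sum_congr rfl fun c hc => Function.update_of_ne (fun h : c = a => ha (h ▸ hc)) 0 κ
          rw [Finset.sum_insert ha, Function.update_self, hsum]
          omega
      · obtain ⟨κ, hκ1, hκ2⟩ := ih (∑ c ∈ s, d c) le_rfl
        refine ⟨Function.update κ a (k - ∑ c ∈ s, d c), fun c => ?_, ?_⟩
        · by_cases hca : c = a
          · subst hca; rw [Function.update_self]; omega
          · rw [Function.update_of_ne hca]; exact hκ1 c
        · have hsum : ∑ c ∈ s, Function.update κ a (k - ∑ c ∈ s, d c) c = ∑ c ∈ s, κ c :=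
            Finset.sum_congr rfl fun c hc => Function.update_of_ne (fun h : c = a => ha (h ▸ hc)) _ κ
          rw [Finset.sum_insert ha, Function.update_self, hsum]
          omega

lemma crux [Fintype σ] [DecidableEq σ] (ES : Set (Finset σ)) (k : ℕ)
    (hNTF : associatedPrimes (MvPolynomial σ K)
        ((MvPolynomial σ K) ⧸ (Ispan K (chr '' ES)) ^ k)
      ⊆ associatedPrimes (MvPolynomial σ K)
        ((MvPolynomial σ K) ⧸ (Ispan K (chr '' ES))))
    (d : σ →₀ ℕ)
    (hdeg : ∀ C : Finset σ, Cov ES C → Priv ES C → k ≤ ∑ c ∈ C, d c) :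
    monomial d (1 : K) ∈ (Ispan K (chr '' ES)) ^ k := by
  classical
  set J := Ispan K (chr '' ES) with hJdef
  by_contra hd
  have hne : (Ideal.Quotient.mk (J ^ k)) (monomial d (1:K)) ≠ 0 := by
    rw [Ne, Ideal.Quotient.eq_zero_iff_mem]; exact hd
  obtain ⟨P, hP, hannP⟩ :=
    exists_le_isAssociatedPrime_of_isNoetherianRing (MvPolynomial σ K) _ hne
  have hPmemAss : P ∈ associatedPrimes (MvPolynomial σ K) ((MvPolynomial σ K) ⧸ J) := hNTF hP
  obtain ⟨hPprime, z', hz'⟩ := isAssociatedPrime_iff.mp hPmemAss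
  obtain ⟨z, rfl⟩ := Ideal.Quotient.mk_surjective z'
  have hPmem : ∀ r : MvPolynomial σ K, r ∈ P ↔ r * z ∈ J := by
    intro r
    rw [hz', Submodule.mem_colon_singleton, Submodule.mem_bot]
    have hsm : r • (Ideal.Quotient.mk J z) = Ideal.Quotient.mk J (r * z) := rfl
    rw [hsm, Ideal.Quotient.eq_zero_iff_mem]
  have hzJ : z ∉ J := by
    intro hz
    apply hPprime.ne_top
    rw [Ideal.eq_top_iff_one, hPmem, one_mul]
    exact hz
  set CS : Finset (Finset σ) := Finset.univ.filter (fun C => Cov ES C ∧ z ∉ pC K C) with hCS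
  have hPinf : P = CS.inf (fun C => pC K C) := by
    ext r
    rw [hPmem, Submodule.mem_finsetInf]
    rw [hJdef, mem_Ispan_chr_iff]
    constructor
    · intro h C hC
      rw [hCS, Finset.mem_filter] at hC
      obtain ⟨-, hCov, hzC⟩ := hC
      rcases (pC_prime C).mem_or_mem (h C hCov) with h1 | h2
      · exact h1
      · exact absurd h2 hzC
    · intro h C hCov
      by_cases hzC : z ∈ pC K C
      · exact Ideal.mul_mem_left _ r hzC
      · exact Ideal.mul_mem_right _ _
          (h C (by rw [hCS, Finset.mem_filter]; exact ⟨Finset.mem_univ _, hCov, hzC⟩))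
  obtain ⟨C₀, hC₀CS, hC₀leP⟩ := (hPprime.inf_le').mp (le_of_eq hPinf.symm)
  rw [hCS, Finset.mem_filter] at hC₀CS
  obtain ⟨-, hC₀cov, hzC₀⟩ := hC₀CS
  obtain ⟨C', hC'sub, hC'cov, hC'priv⟩ := exists_priv_subcover ES C₀ hC₀cov
  have hpCmono : pC K C' ≤ pC K C₀ :=
    Ispan_mono (Set.image_mono (Finset.coe_subset.mpr hC'sub))
  have hzC' : z ∉ pC K C' := fun h => hzC₀ (hpCmono h)
  have hC'CS : C' ∈ CS := by
    rw [hCS, Finset.mem_filter]; exact ⟨Finset.mem_univ _, hC'cov, hzC'⟩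
  have hPeq : P = pC K C' :=
    le_antisymm (hPinf ▸ Finset.inf_le hC'CS) (hpCmono.trans hC₀leP)
  obtain ⟨κ, hκle, hκsum⟩ := exists_weights C' d k (hdeg C' hC'cov hC'priv)
  have hEfun : ∀ c : σ, ∃ E, (c ∈ C' → (E ∈ ES ∧ E ∩ C' = {c})) := by
    intro c
    by_cases h : c ∈ C'
    · obtain ⟨E, h1, h2⟩ := hC'priv c h
      exact ⟨E, fun _ => ⟨h1, h2⟩⟩
    · exact ⟨∅, fun hc => absurd hc h⟩
  choose Efun hEf using hEfun
  set σ₀ : σ →₀ ℕ := ∑ c ∈ C', κ c • chr (Efun c \ {c}) with hσ₀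
  have hsmem : monomial σ₀ (1:K) * monomial d 1 ∈ J ^ k := by
    rw [monomial_mul, one_mul, hJdef, Ispan_pow, monomial_mem_Ispan]
    refine ⟨∑ c ∈ C', κ c • chr (Efun c), ?_, ?_⟩
    · have := wsum_mem_sumset (T := chr '' ES) C' κ (fun c => chr (Efun c))
        (fun c hc => ⟨Efun c, (hEf c hc).1, rfl⟩)
      rwa [hκsum] at this
    · have hsplit : ∀ c ∈ C', chr (Efun c) = Finsupp.single c 1 + chr (Efun c \ {c}) := by
        intro c hc
        apply chr_sdiff_singleton
        have hc2 : c ∈ Efun c ∩ C' := by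
          rw [(hEf c hc).2]; exact Finset.mem_singleton_self c
        exact (Finset.mem_inter.mp hc2).1
      rw [Finset.sum_congr rfl fun c hc => by rw [hsplit c hc, smul_add]]
      rw [Finset.sum_add_distrib]
      have hsingle : (∑ c ∈ C', κ c • Finsupp.single c (1:ℕ)) ≤ d := by
        rw [Finsupp.le_def]
        intro a
        rw [Finsupp.finset_sum_apply]
        have hterm : ∀ c ∈ C', (κ c • Finsupp.single c (1:ℕ)) a
            = if c = a then κ c else 0 := by
          intro c hc
          rw [Finsupp.smul_apply, Finsupp.single_apply]
          split <;> simp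
        rw [Finset.sum_congr rfl hterm, Finset.sum_ite_eq' C' a κ]
        split
        · exact hκle a
        · exact Nat.zero_le _
      calc (∑ c ∈ C', κ c • Finsupp.single c 1) + σ₀
          ≤ d + σ₀ := by gcongr
        _ = σ₀ + d := add_comm _ _
  have hsP : monomial σ₀ (1:K) ∈ P := by
    apply hannP
    rw [Submodule.mem_colon_singleton, Submodule.mem_bot]
    have hsm : (monomial σ₀ (1:K)) • (Ideal.Quotient.mk (J^k) (monomial d (1:K)))
        = Ideal.Quotient.mk (J^k) (monomial σ₀ 1 * monomial d 1) := rfl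
    rw [hsm, Ideal.Quotient.eq_zero_iff_mem]
    exact hsmem
  rw [hPeq, monomial_mem_pC] at hsP
  obtain ⟨c, hc, hc1⟩ := hsP
  have hzero : σ₀ c = 0 := by
    rw [hσ₀, Finsupp.finset_sum_apply]
    apply Finset.sum_eq_zero
    intro c' hc'
    have hnm : c ∉ Efun c' \ {c'} := by
      intro hmem
      rw [Finset.mem_sdiff, Finset.mem_singleton] at hmem
      have hci : c ∈ Efun c' ∩ C' := Finset.mem_inter.mpr ⟨hmem.1, hc⟩
      rw [(hEf c' hc').2, Finset.mem_singleton] at hci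
      exact hmem.2 hci
    rw [Finsupp.smul_apply, chr_apply, if_neg hnm, smul_zero]
  omega

lemma sum_chr_eq_card [DecidableEq σ] (W C : Finset σ) :
    ∑ c ∈ C, chr W c = (C ∩ W).card := by
  rw [Finset.sum_congr rfl (fun c _ => chr_apply W c), Finset.sum_ite_mem,
    Finset.card_eq_sum_ones]

lemma chrW_mem_pC_sq [DecidableEq σ] (W C : Finset σ) {a b : σ}
    (ha : a ∈ C ∩ W) (hb : b ∈ C ∩ W) (hab : a ≠ b) :
    monomial (chr W) (1:K) ∈ (pC K C) ^ 2 := by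
  rw [pC, Ispan_pow, monomial_mem_Ispan]
  refine ⟨Finsupp.single a 1 + Finsupp.single b 1,
    ⟨Finsupp.single a 1, ⟨a, (Finset.mem_inter.mp ha).1, rfl⟩,
      Finsupp.single b 1,
      ⟨Finsupp.single b 1, ⟨b, (Finset.mem_inter.mp hb).1, rfl⟩, 0, rfl, (add_zero _).symm⟩,
      rfl⟩, ?_⟩
  rw [Finsupp.le_def]
  intro x
  rw [Finsupp.add_apply, Finsupp.single_apply, Finsupp.single_apply, chr_apply]
  rcases eq_or_ne a x with rfl | hax
  · rw [if_pos rfl, if_neg (fun h : b = a => hab h.symm),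
      if_pos (Finset.mem_inter.mp ha).2]
    omega
  · rw [if_neg hax]
    rcases eq_or_ne b x with rfl | hbx
    · rw [if_pos rfl, if_pos (Finset.mem_inter.mp hb).2]
    · rw [if_neg hbx]
      exact Nat.zero_le _

lemma pC_mem_minimalPrimes [DecidableEq σ] (ES : Set (Finset σ)) (W : Finset σ)
    (C : Finset σ) (hcov : Cov ES C) (hpriv : Priv ES C) (hCW : (C ∩ W).Nonempty) :
    pC K C ∈ (Ispan K (chr '' ES ∪ {chr W})).minimalPrimes := by
  have hLle : Ispan K (chr '' ES ∪ {chr W}) ≤ pC K C := by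
    rw [Ispan, Ideal.span_le]
    rintro _ ⟨e, he, rfl⟩
    rw [SetLike.mem_coe, monomial_mem_pC]
    rcases he with ⟨E, hE, rfl⟩ | he
    · obtain ⟨c, hc⟩ := hcov E hE
      rw [Finset.mem_inter] at hc
      exact ⟨c, hc.2, by rw [chr_apply, if_pos hc.1]⟩
    · rw [Set.mem_singleton_iff.mp he]
      obtain ⟨c, hc⟩ := hCW
      rw [Finset.mem_inter] at hc
      exact ⟨c, hc.1, by rw [chr_apply, if_pos hc.2]⟩
  constructor
  · exact ⟨pC_prime C, hLle⟩
  · rintro q ⟨hqprime, hLq⟩ hqle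
    rw [pC, Ispan, Ideal.span_le]
    rintro _ ⟨e, ⟨c, hcC, rfl⟩, rfl⟩
    obtain ⟨E, hE, hEC⟩ := hpriv c hcC
    have hcE : c ∈ E := by
      have : c ∈ E ∩ C := by rw [hEC]; exact Finset.mem_singleton_self c
      exact (Finset.mem_inter.mp this).1
    have hgen : monomial (chr E) (1:K) ∈ q :=
      hLq (Ideal.subset_span ⟨chr E, Or.inl ⟨E, hE, rfl⟩, rfl⟩)
    have hfactor : monomial (chr E) (1:K)
        = monomial (Finsupp.single c 1) 1 * monomial (chr (E \ {c})) 1 := by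
      rw [monomial_mul, one_mul, ← chr_sdiff_singleton hcE]
    rcases hqprime.mem_or_mem (hfactor ▸ hgen) with h | h
    · exact h
    · exfalso
      obtain ⟨c', hc'C, hc'1⟩ := monomial_mem_pC.mp (hqle h)
      rw [chr_apply] at hc'1
      split at hc'1
      · rename_i hc'E
        rw [Finset.mem_sdiff, Finset.mem_singleton] at hc'E
        have : c' ∈ E ∩ C := Finset.mem_inter.mpr ⟨hc'E.1, hc'C⟩
        rw [hEC, Finset.mem_singleton] at this
        exact hc'E.2 this
      · omega
end SP14

/-- An ideal is normally torsion-free if `Ass(R/I^k) ⊆ Ass(R/I)` for all `k ≥ 1`. -/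
def IsNTF {R : Type*} [CommRing R] (I : Ideal R) : Prop :=
  ∀ k : ℕ, 1 ≤ k →
    associatedPrimes R (R ⧸ I ^ k) ⊆ associatedPrimes R (R ⧸ I)

/- `I ⊆ R = K[x_1,…,x_n]` is the square-free monomial ideal with minimal generating set
`G(I) = {u_0, …, u_m}`, `u_j = ∏_{i ∈ U j} x_i` (the antichain condition guarantees that
these square-free monomials are precisely the minimal generators).  `S = K[x_1,…,x_{n+m+1}]`
adds one new variable for each generator, `f = ∏_{i ∈ F} x_i` divides the last generator,
and `L = (u_0, …, u_{m-1})S + f·x_{n+1}⋯x_{n+m+1}·S`. -/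
theorem stmt_14 {K : Type*} [Field K] {n m : ℕ}
    (U : Fin (m + 1) → Finset (Fin n))
    (hU : ∀ j k : Fin (m + 1), j ≠ k → ¬ U j ⊆ U k)
    (hNTF : IsNTF (Ideal.span
      (Set.range fun j : Fin (m + 1) => ∏ i ∈ U j, (X i : MvPolynomial (Fin n) K))))
    (F : Finset (Fin n)) (hF : F ⊆ U (Fin.last m))
    (J : Ideal (MvPolynomial (Fin (n + (m + 1))) K))
    (hJ : J = Ideal.span {f : MvPolynomial (Fin (n + (m + 1))) K |
      ∃ j : Fin (m + 1), j ≠ Fin.last m ∧ f = ∏ i ∈ U j, X (Fin.castAdd (m + 1) i)})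
    (v : MvPolynomial (Fin (n + (m + 1))) K)
    (hv : v = (∏ i ∈ F, X (Fin.castAdd (m + 1) i)) * ∏ j : Fin (m + 1), X (Fin.natAdd n j))
    (L : Ideal (MvPolynomial (Fin (n + (m + 1))) K))
    (hL : L = J + Ideal.span {v})
    (hvp : ∀ p ∈ L.minimalPrimes, v ∉ p ^ 2)
    (hJNTF : IsNTF J) :
    ∀ k : ℕ, 1 ≤ k → (L ^ (k + 1)).colon L = L ^ k := by
  classical
  intro k hk
  set ES : Set (Finset (Fin (n + (m + 1)))) :=
    {E | ∃ j : Fin (m + 1), j ≠ Fin.last m ∧ E = (U j).image (Fin.castAdd (m + 1))} with hES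
  have hprodX : ∀ A : Finset (Fin n),
      (∏ i ∈ A, (X (Fin.castAdd (m + 1) i) : MvPolynomial (Fin (n + (m + 1))) K))
        = monomial (SP14.chr (A.image (Fin.castAdd (m + 1)))) 1 := by
    intro A
    rw [← SP14.prod_X_eq_monomial_chr,
      Finset.prod_image (fun a _ b _ h => Fin.castAdd_injective _ _ h)]
  have hJ' : J = SP14.Ispan K (SP14.chr '' ES) := by
    rw [hJ, SP14.Ispan]
    congr 1
    ext f
    constructor
    · rintro ⟨j, hj, rfl⟩
      exact ⟨SP14.chr ((U j).image (Fin.castAdd (m + 1))), ⟨_, ⟨j, hj, rfl⟩, rfl⟩,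
        (hprodX (U j)).symm⟩
    · rintro ⟨e, ⟨E, ⟨j, hj, rfl⟩, rfl⟩, rfl⟩
      exact ⟨j, hj, (hprodX (U j)).symm⟩
  set NV : Finset (Fin (n + (m + 1))) := Finset.univ.image (Fin.natAdd n) with hNV
  set Vs : Finset (Fin (n + (m + 1))) := F.image (Fin.castAdd (m + 1)) ∪ NV with hVs
  have hdisj : Disjoint (F.image (Fin.castAdd (m + 1))) NV := by
    rw [Finset.disjoint_left]
    rintro a ha hb
    obtain ⟨i, _, rfl⟩ := Finset.mem_image.mp ha
    obtain ⟨j, _, hj⟩ := Finset.mem_image.mp hb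
    have hval := congrArg Fin.val hj
    have hlt : (i : ℕ) < n := i.isLt
    simp only [Fin.coe_castAdd, Fin.coe_natAdd] at hval
    omega
  have hv' : v = monomial (SP14.chr Vs) 1 := by
    rw [hv, hprodX F]
    have hinj : Function.Injective (Fin.natAdd n (m := m + 1)) := by
      intro a b h
      have := congrArg Fin.val h
      simp only [Fin.coe_natAdd] at this
      exact Fin.ext (by omega)
    have h2 : (∏ j : Fin (m + 1), (X (Fin.natAdd n j) : MvPolynomial (Fin (n + (m + 1))) K))
        = monomial (SP14.chr NV) 1 := by
      rw [← SP14.prod_X_eq_monomial_chr, hNV, Finset.prod_image (fun a _ b _ h => hinj h)]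
    rw [h2, monomial_mul, one_mul, hVs, SP14.chr_union_of_disjoint hdisj]
  set Gset : Set ((Fin (n + (m + 1))) →₀ ℕ) := SP14.chr '' ES ∪ {SP14.chr Vs} with hGset
  have hL' : L = SP14.Ispan K Gset := by
    rw [hL, hJ', hv', hGset]
    simp only [SP14.Ispan]
    rw [Set.image_union, Set.image_singleton, Ideal.span_union, Submodule.add_eq_sup]
  apply le_antisymm
  · -- hard direction
    intro x hx
    rw [hL', SP14.Ispan_pow, SP14.mem_Ispan]
    intro d hd
    have hvL : v ∈ L := by
      rw [hL', SP14.Ispan]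
      exact Ideal.subset_span ⟨SP14.chr Vs, Or.inr rfl, hv'.symm⟩
    have hxv := Submodule.mem_colon.mp hx v hvL
    rw [smul_eq_mul] at hxv
    rw [hL', SP14.Ispan_pow, SP14.mem_Ispan] at hxv
    have hdm : d + SP14.chr Vs ∈ (x * v).support := by
      rw [MvPolynomial.mem_support_iff, hv', MvPolynomial.coeff_mul_monomial, mul_one]
      exact MvPolynomial.mem_support_iff.mp hd
    obtain ⟨e, he, hle⟩ := hxv _ hdm
    obtain ⟨i, b, hik, hb, rfl⟩ := SP14.sumset_union_singleton he
    rcases Nat.eq_zero_or_pos i with rfl | hipos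
    · -- crux case
      rw [zero_smul, zero_add] at hle
      rw [Nat.sub_zero] at hb
      have hmono : monomial d (1 : K) ∈ (SP14.Ispan K (SP14.chr '' ES)) ^ k := by
        apply SP14.crux ES k ?hntf d ?hdeg
        case hntf =>
          have hh := hJNTF k hk
          rw [hJ'] at hh
          exact hh
        case hdeg =>
          intro C hcov hpriv
          have hq := SP14.le_sum_of_mem_sumset hb C ?hT
          case hT =>
            rintro a ⟨E, hE, rfl⟩
            obtain ⟨c₀, hc₀⟩ := hcov E hE
            rw [Finset.mem_inter] at hc₀
            calc 1 = SP14.chr E c₀ := by rw [SP14.chr_apply, if_pos hc₀.1]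
              _ ≤ ∑ c ∈ C, SP14.chr E c :=
                Finset.single_le_sum (fun c _ => Nat.zero_le _) hc₀.2
          have hsum_le : ∑ c ∈ C, b c ≤ ∑ c ∈ C, d c + ∑ c ∈ C, SP14.chr Vs c := by
            rw [← Finset.sum_add_distrib]
            apply Finset.sum_le_sum
            intro c _
            have hlec := Finsupp.le_def.mp hle c
            rw [Finsupp.add_apply] at hlec
            exact hlec
          have hcard : ∑ c ∈ C, SP14.chr Vs c ≤ 1 := by
            by_contra hgt
            push_neg at hgt
            rw [SP14.sum_chr_eq_card] at hgt
            obtain ⟨a, haCV, b', hbCV, hab⟩ := Finset.one_lt_card.mp hgt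
            have hmin : SP14.pC K C ∈ L.minimalPrimes := by
              rw [hL', hGset]
              exact SP14.pC_mem_minimalPrimes ES Vs C hcov hpriv ⟨a, haCV⟩
            exact hvp _ hmin (hv' ▸ SP14.chrW_mem_pC_sq Vs C haCV hbCV hab)
          omega
      rw [SP14.Ispan_pow, SP14.monomial_mem_Ispan] at hmono
      obtain ⟨e, heJ, hled⟩ := hmono
      exact ⟨e, SP14.sumset_mono Set.subset_union_left heJ, hled⟩
    · -- i ≥ 1
      refine ⟨(i - 1) • SP14.chr Vs + b, ?_, ?_⟩
      · have h1 : (i - 1) • SP14.chr Vs ∈ SP14.sumset (i - 1) Gset :=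
          SP14.nsmul_mem_sumset (Or.inr rfl)
        have h2 : b ∈ SP14.sumset (k + 1 - i) Gset :=
          SP14.sumset_mono Set.subset_union_left hb
        have h3 := SP14.add_mem_sumset h1 h2
        have heq : (i - 1) + (k + 1 - i) = k := by omega
        rwa [heq] at h3
      · rw [Finsupp.le_def]
        intro a
        have hlea := Finsupp.le_def.mp hle a
        rw [Finsupp.add_apply, Finsupp.add_apply, Finsupp.smul_apply, smul_eq_mul] at hlea
        rw [Finsupp.add_apply, Finsupp.smul_apply, smul_eq_mul]
        by_cases hmemV : a ∈ Vs
        · rw [SP14.chr_apply, if_pos hmemV] at hlea ⊢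
          omega
        · rw [SP14.chr_apply, if_neg hmemV] at hlea ⊢
          omega
  · -- easy direction
    intro x hx
    rw [Submodule.mem_colon]
    intro p hp
    rw [smul_eq_mul, pow_succ]
    exact Ideal.mul_mem_mul hx hp
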